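/- Let A, B ∈ ℝ^{k×k} and let ‖·‖₂ denote the spectral (operator) norm. Then |det(A) − det(B)| ≤ k ‖A − B‖₂ max(‖A‖₂, ‖B‖₂)^{k−1}. -/

import Mathlib

open Matrix Finset

lemma trace_eq_sum_eig {n : Type*} [Fintype n] [DecidableEq n]
    {A : Matrix n n ℝ} (hA : A.IsHermitian) :
    A.trace = ∑ i, hA.eigenvalues i := by
  conv_lhs => rw [hA.spectral_theorem, Unitary.conjStarAlgAut_apply]
  rw [trace_mul_cycle, Unitary.coe_star_mul_self, one_mul, trace_diagonal]
  simp

lemma det_le_one_of_psd {n : Type*} [Fintype n] [DecidableEq n] [Nonempty n]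
    {S : Matrix n n ℝ} (hS : S.PosSemidef) (htr : S.trace = (Fintype.card n : ℝ)) :
    S.det ≤ 1 := by
  set k := Fintype.card n with hk
  have hkpos : 0 < k := Fintype.card_pos
  have hkne : ((k : ℝ)) ≠ 0 := Nat.cast_ne_zero.2 hkpos.ne'
  have hdet : S.det = ∏ i, hS.1.eigenvalues i := by
    rw [hS.1.det_eq_prod_eigenvalues]; simp
  have hnn : ∀ i, 0 ≤ hS.1.eigenvalues i := hS.eigenvalues_nonneg
  have hAMGM : ∏ i, (hS.1.eigenvalues i) ^ ((k : ℝ)⁻¹) ≤ 1 := by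
    have hw : ∑ _i : n, ((k : ℝ)⁻¹) = 1 := by
      rw [sum_const, card_univ, ← hk, nsmul_eq_mul, mul_inv_cancel₀ hkne]
    have := Real.geom_mean_le_arith_mean_weighted univ (fun _ => (k : ℝ)⁻¹)
      (fun i => hS.1.eigenvalues i) (fun i _ => inv_nonneg.2 (Nat.cast_nonneg k))
      hw (fun i _ => hnn i)
    calc ∏ i, (hS.1.eigenvalues i) ^ ((k : ℝ)⁻¹) ≤ ∑ i, (k:ℝ)⁻¹ * hS.1.eigenvalues i := this
      _ = (k:ℝ)⁻¹ * S.trace := by rw [← mul_sum, ← trace_eq_sum_eig]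
      _ = 1 := by rw [htr]; exact inv_mul_cancel₀ hkne
  have key : S.det = (∏ i, (hS.1.eigenvalues i) ^ ((k : ℝ)⁻¹)) ^ k := by
    rw [hdet, ← prod_pow]
    refine prod_congr rfl fun i _ => ?_
    rw [← Real.rpow_natCast ((hS.1.eigenvalues i) ^ ((k : ℝ)⁻¹)) k,
      ← Real.rpow_mul (hnn i), inv_mul_cancel₀ hkne, Real.rpow_one]
  rw [key]
  calc (∏ i, (hS.1.eigenvalues i) ^ ((k : ℝ)⁻¹)) ^ k ≤ 1 ^ k :=
        pow_le_pow_left₀ (prod_nonneg fun i _ => Real.rpow_nonneg (hnn i) _) hAMGM k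
    _ = 1 := one_pow k

lemma det_le_prod_norm_row {n : Type*} [Fintype n] [DecidableEq n] [Nonempty n]
    (m : n → EuclideanSpace ℝ n) :
    |(Matrix.of fun i j => m i j).det| ≤ ∏ i, ‖m i‖ := by
  by_cases hz : ∃ i, m i = 0
  · obtain ⟨i, hi⟩ := hz
    have : (Matrix.of fun i j => m i j).det = 0 := by
      apply det_eq_zero_of_row_eq_zero i
      intro j; simp [hi]
    rw [this, abs_zero]
    exact prod_nonneg fun i _ => norm_nonneg _
  · push_neg at hz
    have hpos : ∀ i, 0 < ‖m i‖ := fun i => norm_pos_iff.2 (hz i)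
    set N : Matrix n n ℝ := Matrix.of fun i j => m i j / ‖m i‖ with hN
    have hsq : ∀ i, ∑ j, m i j ^ 2 = ‖m i‖ ^ 2 := by
      intro i
      rw [EuclideanSpace.norm_eq, Real.sq_sqrt (by positivity)]
      simp [sq_abs]
    have hdetM : (Matrix.of fun i j => m i j).det = (∏ i, ‖m i‖) * N.det := by
      rw [← det_mul_column]
      congr 1; ext i j
      simp only [Matrix.of_apply, hN]
      rw [mul_div_cancel₀ _ (hpos i).ne']
    have hS : (N * Nᴴ).PosSemidef := posSemidef_self_mul_conjTranspose N
    have hdiag : ∀ i, (N * Nᴴ) i i = 1 := by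
      intro i
      simp only [mul_apply, conjTranspose_apply, hN, Matrix.of_apply, star_trivial]
      have h1 : ∑ j, m i j / ‖m i‖ * (m i j / ‖m i‖) = (∑ j, m i j ^ 2) / ‖m i‖ ^ 2 := by
        rw [sum_div]; congr 1; ext j; ring
      rw [h1, hsq, div_self (pow_pos (hpos i) 2).ne']
    have htr : (N * Nᴴ).trace = (Fintype.card n : ℝ) := by
      rw [trace]
      simp only [diag_apply, hdiag]
      simp [card_univ]
    have hdetS : (N * Nᴴ).det = N.det ^ 2 := by
      rw [det_mul, det_conjTranspose, star_trivial, sq]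
    have h1 : N.det ^ 2 ≤ 1 := by
      rw [← hdetS]; exact det_le_one_of_psd hS htr
    have h2 : |N.det| ≤ 1 := by
      rwa [← sq_le_one_iff_abs_le_one]
    rw [hdetM, abs_mul, abs_of_nonneg (prod_nonneg fun i _ => norm_nonneg _)]
    calc (∏ i, ‖m i‖) * |N.det| ≤ (∏ i, ‖m i‖) * 1 :=
          mul_le_mul_of_nonneg_left h2 (prod_nonneg fun i _ => norm_nonneg _)
      _ = ∏ i, ‖m i‖ := mul_one _
lemma col_norm_le {k : ℕ} (M : Matrix (Fin k) (Fin k) ℝ) (i : Fin k) :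
    ‖((WithLp.equiv 2 (Fin k → ℝ)).symm (fun j => M j i) : EuclideanSpace ℝ (Fin k))‖
      ≤ ‖Matrix.toEuclideanCLM (𝕜 := ℝ) M‖ := by
  have h1 : (fun j => M j i) = Matrix.toLin' M (Pi.single i 1) := by
    ext j; simp [Matrix.toLin'_apply, mulVec_single]
  rw [h1, Matrix.toLin'_apply, WithLp.equiv_symm_apply, ← Matrix.toEuclideanCLM_toLp]
  calc ‖Matrix.toEuclideanCLM (𝕜 := ℝ) M ((WithLp.equiv 2 _).symm (Pi.single i 1))‖
      ≤ ‖Matrix.toEuclideanCLM (𝕜 := ℝ) M‖ * ‖((WithLp.equiv 2 _).symm (Pi.single i 1) : EuclideanSpace ℝ (Fin k))‖ :=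
        (Matrix.toEuclideanCLM (𝕜 := ℝ) M).le_opNorm _
    _ = ‖Matrix.toEuclideanCLM (𝕜 := ℝ) M‖ := by
        rw [WithLp.equiv_symm_apply, PiLp.norm_toLp_single, norm_one, mul_one]

/-- Determinant perturbation inequality (Ipsen–Rehman):
`|det A - det B| ≤ k ‖A - B‖₂ max(‖A‖₂, ‖B‖₂)^{k-1}`, where `‖·‖₂` is the spectral
(operator) norm of a matrix, realized via `Matrix.toEuclideanCLM`. -/
theorem stmt_13 (k : ℕ) (hk : 1 ≤ k) (A B : Matrix (Fin k) (Fin k) ℝ) :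
    |A.det - B.det|
      ≤ (k : ℝ) * ‖Matrix.toEuclideanCLM (𝕜 := ℝ) (A - B)‖
          * max ‖Matrix.toEuclideanCLM (𝕜 := ℝ) A‖ ‖Matrix.toEuclideanCLM (𝕜 := ℝ) B‖
              ^ (k - 1) := by
  haveI : Nonempty (Fin k) := ⟨⟨0, hk⟩⟩
  set G : MultilinearMap ℝ (fun _ : Fin k => EuclideanSpace ℝ (Fin k)) ℝ :=
    (Matrix.detRowAlternating : (Fin k → ℝ) [⋀^Fin k]→ₗ[ℝ] ℝ).toMultilinearMap.compLinearMap
      (fun _ => (WithLp.linearEquiv 2 ℝ (Fin k → ℝ)).toLinearMap) with hG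
  have hGapp : ∀ m : Fin k → EuclideanSpace ℝ (Fin k),
      G m = (Matrix.of fun i j => m i j).det := fun m => rfl
  set f : ContinuousMultilinearMap ℝ (fun _ : Fin k => EuclideanSpace ℝ (Fin k)) ℝ :=
    G.mkContinuous 1 (fun m => by
      rw [hGapp, one_mul, Real.norm_eq_abs]; exact det_le_prod_norm_row m) with hf
  have hfnorm : ‖f‖ ≤ 1 := G.mkContinuous_norm_le zero_le_one _
  set m₁ : Fin k → EuclideanSpace ℝ (Fin k) :=
    fun i => (WithLp.equiv 2 (Fin k → ℝ)).symm (fun j => A j i) with hm₁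
  set m₂ : Fin k → EuclideanSpace ℝ (Fin k) :=
    fun i => (WithLp.equiv 2 (Fin k → ℝ)).symm (fun j => B j i) with hm₂
  have hfm₁ : f m₁ = A.det := by
    show G m₁ = A.det
    rw [hGapp]
    have : (Matrix.of fun i j => m₁ i j) = Aᵀ := rfl
    rw [this, det_transpose]
  have hfm₂ : f m₂ = B.det := by
    show G m₂ = B.det
    rw [hGapp]
    have : (Matrix.of fun i j => m₂ i j) = Bᵀ := rfl
    rw [this, det_transpose]
  have hnm₁ : ‖m₁‖ ≤ ‖Matrix.toEuclideanCLM (𝕜 := ℝ) A‖ :=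
    (pi_norm_le_iff_of_nonneg (norm_nonneg _)).2 fun i => col_norm_le A i
  have hnm₂ : ‖m₂‖ ≤ ‖Matrix.toEuclideanCLM (𝕜 := ℝ) B‖ :=
    (pi_norm_le_iff_of_nonneg (norm_nonneg _)).2 fun i => col_norm_le B i
  have hsub : ‖m₁ - m₂‖ ≤ ‖Matrix.toEuclideanCLM (𝕜 := ℝ) (A - B)‖ := by
    refine (pi_norm_le_iff_of_nonneg (norm_nonneg _)).2 fun i => ?_
    have : m₁ i - m₂ i
        = (WithLp.equiv 2 (Fin k → ℝ)).symm (fun j => (A - B) j i) := by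
      apply (WithLp.equiv 2 (Fin k → ℝ)).injective
      ext j
      simp [hm₁, hm₂]
    show ‖m₁ i - m₂ i‖ ≤ _
    rw [this]
    exact col_norm_le (A - B) i
  have key := f.norm_image_sub_le m₁ m₂
  rw [hfm₁, hfm₂, Real.norm_eq_abs] at key
  simp only [Fintype.card_fin] at key
  have hmax : max ‖m₁‖ ‖m₂‖ ^ (k - 1)
      ≤ max ‖Matrix.toEuclideanCLM (𝕜 := ℝ) A‖ ‖Matrix.toEuclideanCLM (𝕜 := ℝ) B‖ ^ (k - 1) :=
    pow_le_pow_left₀ (le_max_iff.2 (Or.inl (norm_nonneg _))) (max_le_max hnm₁ hnm₂) _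
  calc |A.det - B.det| ≤ ‖f‖ * k * max ‖m₁‖ ‖m₂‖ ^ (k - 1) * ‖m₁ - m₂‖ := key
    _ ≤ 1 * k * (max ‖Matrix.toEuclideanCLM (𝕜 := ℝ) A‖ ‖Matrix.toEuclideanCLM (𝕜 := ℝ) B‖ ^ (k - 1))
        * ‖Matrix.toEuclideanCLM (𝕜 := ℝ) (A - B)‖ := by
        gcongr
    _ = (k : ℝ) * ‖Matrix.toEuclideanCLM (𝕜 := ℝ) (A - B)‖
          * max ‖Matrix.toEuclideanCLM (𝕜 := ℝ) A‖ ‖Matrix.toEuclideanCLM (𝕜 := ℝ) B‖ ^ (k - 1) := by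
        ring
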